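/- Let $\Phi: M_d \to M_d$ be a unital quantum channel with Kraus operators $\{K_i\}$, and suppose $X \in M_d$ satisfies $\Phi(X) = \lambda X$ with $|\lambda| = 1$. Then $K_i X = \lambda X K_i$ for all $i$. -/

import Mathlib

open Matrix

private lemma trace_mul_conjT (d : ℕ) (A : Matrix (Fin d) (Fin d) ℂ) :
    (A * Aᴴ).trace = ∑ j, ∑ k, (Complex.normSq (A j k) : ℂ) := by
  simp [Matrix.trace, Matrix.mul_apply, Matrix.conjTranspose_apply, Matrix.diag,
    mul_comm, Complex.mul_conj]

/-- If `Φ(X) = ∑ᵢ Kᵢ X Kᵢ*` is a unital quantum channel and `Φ(X) = λ X` with `|λ| = 1`,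
then `Kᵢ X = λ X Kᵢ` for every Kraus operator `Kᵢ`. -/
theorem kraus_commute_of_peripheral_eigenvector (d n : ℕ)
    (K : Fin n → Matrix (Fin d) (Fin d) ℂ)
    (Φ : Matrix (Fin d) (Fin d) ℂ → Matrix (Fin d) (Fin d) ℂ)
    (hΦ : ∀ Y, Φ Y = ∑ i, K i * Y * (K i)ᴴ)
    (htp : ∑ i, (K i)ᴴ * K i = 1)
    (hunital : ∑ i, K i * (K i)ᴴ = 1)
    (X : Matrix (Fin d) (Fin d) ℂ) (lam : ℂ) (hlam : ‖lam‖ = 1)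
    (heig : Φ X = lam • X) :
    ∀ i, K i * X = lam • (X * K i) := by
  have hlc : lam * (starRingEnd ℂ) lam = 1 := by
    rw [Complex.mul_conj, Complex.normSq_eq_norm_sq, hlam]
    norm_num
  have heigK : ∑ i, K i * X * (K i)ᴴ = lam • X := by rw [← hΦ]; exact heig
  have heigKs : ∑ i, K i * Xᴴ * (K i)ᴴ = (starRingEnd ℂ) lam • Xᴴ := by
    have := congrArg conjTranspose heigK
    simpa [conjTranspose_sum, Matrix.conjTranspose_mul, mul_assoc] using this
  set A : Fin n → Matrix (Fin d) (Fin d) ℂ := fun i => K i * X - lam • (X * K i) with hA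
  set T : ℂ := (X * Xᴴ).trace with hT
  -- four trace sums
  have h1 : ∑ i, (K i * X * Xᴴ * (K i)ᴴ).trace = T := by
    have : ∀ i, (K i * X * Xᴴ * (K i)ᴴ).trace = (X * Xᴴ * ((K i)ᴴ * K i)).trace := by
      intro i
      rw [show K i * X * Xᴴ * (K i)ᴴ = K i * (X * Xᴴ * (K i)ᴴ) by noncomm_ring,
        Matrix.trace_mul_comm]
      congr 1
      noncomm_ring
    simp_rw [this, ← Matrix.trace_sum, ← Finset.mul_sum, htp, mul_one, hT]
  have h2 : ∑ i, (K i * X * (K i)ᴴ * Xᴴ).trace = lam * T := by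
    simp_rw [← Matrix.trace_sum, ← Finset.sum_mul, heigK, Matrix.smul_mul,
      Matrix.trace_smul, hT, smul_eq_mul]
  have h3 : ∑ i, (X * K i * Xᴴ * (K i)ᴴ).trace = (starRingEnd ℂ) lam * T := by
    have : ∀ i, (X * K i * Xᴴ * (K i)ᴴ).trace = (K i * Xᴴ * (K i)ᴴ * X).trace := by
      intro i
      rw [show X * K i * Xᴴ * (K i)ᴴ = X * (K i * Xᴴ * (K i)ᴴ) by noncomm_ring,
        Matrix.trace_mul_comm]
    simp_rw [this, ← Matrix.trace_sum, ← Finset.sum_mul, heigKs, Matrix.smul_mul,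
      Matrix.trace_smul, smul_eq_mul, hT, Matrix.trace_mul_comm Xᴴ X]
  have h4 : ∑ i, (X * K i * (K i)ᴴ * Xᴴ).trace = T := by
    have : ∀ i, (X * K i * (K i)ᴴ * Xᴴ).trace = (K i * (K i)ᴴ * (Xᴴ * X)).trace := by
      intro i
      rw [show X * K i * (K i)ᴴ * Xᴴ = X * (K i * (K i)ᴴ * Xᴴ) by noncomm_ring,
        Matrix.trace_mul_comm]
      congr 1
      noncomm_ring
    simp_rw [this, ← Matrix.trace_sum, ← Finset.sum_mul, hunital, one_mul, hT,
      Matrix.trace_mul_comm Xᴴ X]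
  have key : ∑ i, (A i * (A i)ᴴ).trace = 0 := by
    have expand : ∀ i, A i * (A i)ᴴ =
        K i * X * Xᴴ * (K i)ᴴ - (starRingEnd ℂ) lam • (K i * X * (K i)ᴴ * Xᴴ)
        - lam • (X * K i * Xᴴ * (K i)ᴴ)
        + (lam * (starRingEnd ℂ) lam) • (X * K i * (K i)ᴴ * Xᴴ) := by
      intro i
      simp only [hA, Matrix.conjTranspose_sub, Matrix.conjTranspose_smul,
        Matrix.conjTranspose_mul, Matrix.sub_mul, Matrix.mul_sub, Matrix.smul_mul,
        Matrix.mul_smul, smul_smul, mul_assoc, starRingEnd_apply]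
      module
    simp_rw [expand, Matrix.trace_add, Matrix.trace_sub, Matrix.trace_smul,
      Finset.sum_add_distrib, Finset.sum_sub_distrib, ← Finset.smul_sum, h1, h2, h3, h4,
      smul_eq_mul]
    linear_combination (-T) * hlc
  -- positivity: each A i = 0
  intro i
  have key' : ∑ i, ∑ j, ∑ k, Complex.normSq (A i j k) = 0 := by
    have := congrArg Complex.re key
    simpa [trace_mul_conjT] using this
  have hz : ∀ j k, Complex.normSq (A i j k) = 0 := by
    have hnn : ∀ i' ∈ Finset.univ, (0:ℝ) ≤ ∑ j, ∑ k, Complex.normSq (A i' j k) :=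
      fun i' _ => Finset.sum_nonneg fun j _ => Finset.sum_nonneg fun k _ =>
        Complex.normSq_nonneg _
    have hi := (Finset.sum_eq_zero_iff_of_nonneg hnn).mp key' i (Finset.mem_univ i)
    intro j k
    have hnj : ∀ j' ∈ Finset.univ, (0:ℝ) ≤ ∑ k, Complex.normSq (A i j' k) :=
      fun j' _ => Finset.sum_nonneg fun k _ => Complex.normSq_nonneg _
    have hj := (Finset.sum_eq_zero_iff_of_nonneg hnj).mp hi j (Finset.mem_univ j)
    exact (Finset.sum_eq_zero_iff_of_nonneg
      (fun k' _ => Complex.normSq_nonneg _)).mp hj k (Finset.mem_univ k)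
  have hA0 : A i = 0 := by
    ext j k
    simpa using Complex.normSq_eq_zero.mp (hz j k)
  have := sub_eq_zero.mp (by simpa [hA] using hA0)
  exact this
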